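/- Let κ ∈ ℝ, κ ≠ 0, and let ρ̂ : (0,∞)² → ℝ be C¹ and positively homogeneous of degree κ, i.e. ρ̂(Aδ, Aη) = A^κ ρ̂(δ,η) for all A > 0 and (δ,η) ∈ (0,∞)². Define p̂_rad(δ,η) = δ·∂_δρ̂ − ρ̂, p̂_tan = p̂_rad + (3/2)η·∂_ηρ̂, q̂ = p̂_tan − p̂_rad. Let J ⊆ (0,∞) be an open interval and let δ, η : J → (0,∞) and m : J → ℝ be differentiable with 2m(r) < r on J, satisfying for all r ∈ J: m'(r) = 4πr²ρ̂(δ(r),η(r)); η'(r) = −(3/r)(η(r) − δ(r)(1 − 2m(r)/r)^{−1/2}); and (d/dr)[p̂_rad(δ(r),η(r))] = (2/r)q̂(δ(r),η(r)) − (ρ̂ + p̂_rad)(δ(r),η(r))·(m(r)/r² + 4πr·p̂_rad(δ(r),η(r)))/(1 − 2m(r)/r). Then for every A > 0 the rescaled functions δ_A(r) := A^{2/κ}δ(Ar), η_A(r) := A^{2/κ}η(Ar), m_A(r) := A^{−1}m(Ar), defined for r ∈ A^{−1}J, satisfy the same three equations. -/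

import Mathlib

open Real Set Topology

/-- Radial pressure `p̂_rad(δ,η) = δ·∂_δρ̂(δ,η) − ρ̂(δ,η)`. -/
noncomputable def pradF (ρ : ℝ × ℝ → ℝ) (x : ℝ × ℝ) : ℝ :=
  x.1 * fderiv ℝ ρ x (1, 0) - ρ x

/-- Tangential pressure `p̂_tan(δ,η) = p̂_rad(δ,η) + (3/2)η·∂_ηρ̂(δ,η)`. -/
noncomputable def ptanF (ρ : ℝ × ℝ → ℝ) (x : ℝ × ℝ) : ℝ :=
  pradF ρ x + (3 / 2) * x.2 * fderiv ℝ ρ x (0, 1)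

/-- Anisotropic pressure `q̂ = p̂_tan − p̂_rad`. -/
noncomputable def qF (ρ : ℝ × ℝ → ℝ) (x : ℝ × ℝ) : ℝ :=
  ptanF ρ x - pradF ρ x

lemma fderiv_scale {κ : ℝ} {ρ : ℝ × ℝ → ℝ}
    (hρ : ContDiffOn ℝ 1 ρ (Ioi 0 ×ˢ Ioi 0))
    (hhom : ∀ A > (0:ℝ), ∀ x : ℝ × ℝ, 0 < x.1 → 0 < x.2 →
      ρ (A * x.1, A * x.2) = A ^ κ * ρ x)
    {B : ℝ} (hB : 0 < B) {x : ℝ × ℝ} (hx1 : 0 < x.1) (hx2 : 0 < x.2) (v : ℝ × ℝ) :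
    fderiv ℝ ρ (B * x.1, B * x.2) v = B ^ (κ - 1) * fderiv ℝ ρ x v := by
  have hU : IsOpen (Ioi (0:ℝ) ×ˢ Ioi (0:ℝ)) := isOpen_Ioi.prod isOpen_Ioi
  have hxU : x ∈ Ioi (0:ℝ) ×ˢ Ioi (0:ℝ) := ⟨hx1, hx2⟩
  have hBxU : (B * x.1, B * x.2) ∈ Ioi (0:ℝ) ×ˢ Ioi (0:ℝ) :=
    ⟨mul_pos hB hx1, mul_pos hB hx2⟩
  have hdiff : DifferentiableAt ℝ ρ x :=
    ((hρ.differentiableOn one_ne_zero).differentiableAt (hU.mem_nhds hxU))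
  have hdiffB : DifferentiableAt ℝ ρ (B * x.1, B * x.2) :=
    ((hρ.differentiableOn one_ne_zero).differentiableAt (hU.mem_nhds hBxU))
  have hsm : ∀ y : ℝ × ℝ, B • y = (B * y.1, B * y.2) := by
    intro y; ext <;> simp [smul_eq_mul]
  have hinner : HasFDerivAt (fun y : ℝ × ℝ => B • y)
      (B • ContinuousLinearMap.id ℝ (ℝ × ℝ)) x := (hasFDerivAt_id x).const_smul B
  have hρB : HasFDerivAt ρ (fderiv ℝ ρ (B * x.1, B * x.2)) (B • x) := by
    rw [hsm x]; exact hdiffB.hasFDerivAt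
  have F1 : HasFDerivAt (fun y : ℝ × ℝ => ρ (B • y))
      ((fderiv ℝ ρ (B * x.1, B * x.2)).comp (B • ContinuousLinearMap.id ℝ (ℝ × ℝ))) x := by
    have := hρB.comp x hinner
    exact this
  have hev : (fun y : ℝ × ℝ => ρ (B • y)) =ᶠ[𝓝 x] (fun y => B ^ κ * ρ y) := by
    filter_upwards [hU.mem_nhds hxU] with y hy
    rw [hsm y]; exact hhom B hB y hy.1 hy.2
  have F2 : HasFDerivAt (fun y : ℝ × ℝ => B ^ κ * ρ y)
      (B ^ κ • fderiv ℝ ρ x) x := by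
    exact hdiff.hasFDerivAt.const_smul (B ^ κ)
  have F1' : HasFDerivAt (fun y : ℝ × ℝ => ρ (B • y)) (B ^ κ • fderiv ℝ ρ x) x :=
    F2.congr_of_eventuallyEq hev
  have huniq := F1.unique F1'
  have happ : B * fderiv ℝ ρ (B * x.1, B * x.2) v = B ^ κ * fderiv ℝ ρ x v := by
    have := congrArg (fun L : (ℝ × ℝ) →L[ℝ] ℝ => L v) huniq
    simpa [hsm v, smul_eq_mul, mul_comm] using this
  have hBκ : B ^ (κ - 1) = B ^ κ / B := by
    rw [Real.rpow_sub hB, Real.rpow_one]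
  rw [hBκ]
  field_simp
  linarith [happ]

lemma rpow_one_add_sub {B : ℝ} (hB : 0 < B) (κ : ℝ) : B * B ^ (κ - 1) = B ^ κ := by
  rw [show κ = 1 + (κ - 1) by ring, Real.rpow_add hB, Real.rpow_one]
  ring_nf

lemma prad_scale {κ : ℝ} {ρ : ℝ × ℝ → ℝ}
    (hρ : ContDiffOn ℝ 1 ρ (Ioi 0 ×ˢ Ioi 0))
    (hhom : ∀ A > (0:ℝ), ∀ x : ℝ × ℝ, 0 < x.1 → 0 < x.2 →
      ρ (A * x.1, A * x.2) = A ^ κ * ρ x)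
    {B : ℝ} (hB : 0 < B) {d e : ℝ} (hx1 : 0 < d) (hx2 : 0 < e) :
    pradF ρ (B * d, B * e) = B ^ κ * pradF ρ (d, e) := by
  have h1 := fderiv_scale hρ hhom hB (x := (d, e)) hx1 hx2 (1, 0)
  have hmul := rpow_one_add_sub hB κ
  have h2 : ρ (B * d, B * e) = B ^ κ * ρ (d, e) := hhom B hB (d, e) hx1 hx2
  simp only [pradF]
  rw [h1, h2]
  linear_combination d * fderiv ℝ ρ (d, e) (1, 0) * hmul

lemma q_scale {κ : ℝ} {ρ : ℝ × ℝ → ℝ}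
    (hρ : ContDiffOn ℝ 1 ρ (Ioi 0 ×ˢ Ioi 0))
    (hhom : ∀ A > (0:ℝ), ∀ x : ℝ × ℝ, 0 < x.1 → 0 < x.2 →
      ρ (A * x.1, A * x.2) = A ^ κ * ρ x)
    {B : ℝ} (hB : 0 < B) {d e : ℝ} (hx1 : 0 < d) (hx2 : 0 < e) :
    qF ρ (B * d, B * e) = B ^ κ * qF ρ (d, e) := by
  have h1 := fderiv_scale hρ hhom hB (x := (d, e)) hx1 hx2 (0, 1)
  have hmul := rpow_one_add_sub hB κ
  simp only [qF, ptanF]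
  rw [h1]
  linear_combination (3 / 2) * e * fderiv ℝ ρ (d, e) (0, 1) * hmul

/-- Proposition (relativistic scale invariance of the TOV equations): if the energy
density `ρ̂` is positively homogeneous of degree `κ ≠ 0` and `(δ, η, m)` solves the
static spherically symmetric Einstein-elastic equations on the open interval `(a,b)`,
then for every `A > 0` the rescaled profiles `δ_A(r) = A^{2/κ}δ(Ar)`,
`η_A(r) = A^{2/κ}η(Ar)`, `m_A(r) = A⁻¹m(Ar)` solve the same equations on `A⁻¹(a,b)`. -/
theorem tov_scale_invariance
    (κ : ℝ) (hκ : κ ≠ 0)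
    (ρ : ℝ × ℝ → ℝ) (hρ : ContDiffOn ℝ 1 ρ (Ioi 0 ×ˢ Ioi 0))
    (hhom : ∀ A > (0 : ℝ), ∀ x : ℝ × ℝ, 0 < x.1 → 0 < x.2 →
      ρ (A * x.1, A * x.2) = A ^ κ * ρ x)
    (a b : ℝ) (ha : 0 ≤ a)
    (δ η m : ℝ → ℝ)
    (hδpos : ∀ r ∈ Ioo a b, 0 < δ r) (hηpos : ∀ r ∈ Ioo a b, 0 < η r)
    (hhor : ∀ r ∈ Ioo a b, 2 * m r < r)
    (hmd : ∀ r ∈ Ioo a b, HasDerivAt m (4 * π * r ^ 2 * ρ (δ r, η r)) r)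
    (hηd : ∀ r ∈ Ioo a b,
      HasDerivAt η (-(3 / r) * (η r - δ r * (1 - 2 * m r / r) ^ (-(1 : ℝ) / 2))) r)
    (htov : ∀ r ∈ Ioo a b,
      HasDerivAt (fun u => pradF ρ (δ u, η u))
        ((2 / r) * qF ρ (δ r, η r)
          - (ρ (δ r, η r) + pradF ρ (δ r, η r))
              * (m r / r ^ 2 + 4 * π * r * pradF ρ (δ r, η r)) / (1 - 2 * m r / r)) r) :
    ∀ A > (0 : ℝ), ∀ r : ℝ, A * r ∈ Ioo a b →
      HasDerivAt (fun u => A⁻¹ * m (A * u))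
        (4 * π * r ^ 2 * ρ (A ^ (2 / κ) * δ (A * r), A ^ (2 / κ) * η (A * r))) r ∧
      HasDerivAt (fun u => A ^ (2 / κ) * η (A * u))
        (-(3 / r) * (A ^ (2 / κ) * η (A * r)
          - A ^ (2 / κ) * δ (A * r) * (1 - 2 * (A⁻¹ * m (A * r)) / r) ^ (-(1 : ℝ) / 2))) r ∧
      HasDerivAt (fun u => pradF ρ (A ^ (2 / κ) * δ (A * u), A ^ (2 / κ) * η (A * u)))
        ((2 / r) * qF ρ (A ^ (2 / κ) * δ (A * r), A ^ (2 / κ) * η (A * r))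
          - (ρ (A ^ (2 / κ) * δ (A * r), A ^ (2 / κ) * η (A * r))
              + pradF ρ (A ^ (2 / κ) * δ (A * r), A ^ (2 / κ) * η (A * r)))
            * ((A⁻¹ * m (A * r)) / r ^ 2
              + 4 * π * r * pradF ρ (A ^ (2 / κ) * δ (A * r), A ^ (2 / κ) * η (A * r)))
            / (1 - 2 * (A⁻¹ * m (A * r)) / r)) r := by
  intro A hA r hr
  have hA0 : A ≠ 0 := ne_of_gt hA
  have hB : (0:ℝ) < A ^ (2 / κ) := Real.rpow_pos_of_pos hA _
  have hrpos : 0 < r := by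
    have h1 : 0 < A * r := lt_of_le_of_lt ha hr.1
    nlinarith
  have hr0 : r ≠ 0 := ne_of_gt hrpos
  have hBκ : (A ^ (2 / κ)) ^ κ = A * A := by
    rw [← Real.rpow_mul hA.le, div_mul_cancel₀ _ hκ,
      show (2:ℝ) = (1:ℝ) + 1 by norm_num, Real.rpow_add hA, Real.rpow_one]
  have hδp : 0 < δ (A * r) := hδpos _ hr
  have hηp : 0 < η (A * r) := hηpos _ hr
  have hhom' : ρ (A ^ (2 / κ) * δ (A * r), A ^ (2 / κ) * η (A * r))
      = (A ^ (2 / κ)) ^ κ * ρ (δ (A * r), η (A * r)) :=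
    hhom _ hB (δ (A * r), η (A * r)) hδp hηp
  have hDpos : 0 < 1 - 2 * m (A * r) / (A * r) := by
    have hAr : 0 < A * r := mul_pos hA hrpos
    rw [sub_pos, div_lt_one hAr]
    exact hhor _ hr
  have hD0 : (1 - 2 * m (A * r) / (A * r)) ≠ 0 := ne_of_gt hDpos
  have hrewrite : 1 - 2 * (A⁻¹ * m (A * r)) / r = 1 - 2 * m (A * r) / (A * r) := by
    field_simp
  have hid : HasDerivAt (fun u : ℝ => A * u) A r := by
    simpa using (hasDerivAt_id r).const_mul A
  refine ⟨?_, ?_, ?_⟩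
  · have h := ((hmd _ hr).comp r hid).const_mul A⁻¹
    simp only [Function.comp] at h
    refine h.congr_deriv (Eq.symm ?_)
    rw [hhom', hBκ]
    field_simp
  · have h := ((hηd _ hr).comp r hid).const_mul (A ^ (2 / κ))
    simp only [Function.comp] at h
    refine h.congr_deriv (Eq.symm ?_)
    rw [hrewrite]
    field_simp
  · have hS : IsOpen {u : ℝ | A * u ∈ Ioo a b} :=
      isOpen_Ioo.preimage (continuous_const.mul continuous_id)
    have hmem : r ∈ {u : ℝ | A * u ∈ Ioo a b} := hr
    have hev : (fun u => pradF ρ (A ^ (2 / κ) * δ (A * u), A ^ (2 / κ) * η (A * u)))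
        =ᶠ[𝓝 r] (fun u => (A ^ (2 / κ)) ^ κ * pradF ρ (δ (A * u), η (A * u))) := by
      filter_upwards [hS.mem_nhds hmem] with u hu
      exact prad_scale hρ hhom hB (hδpos _ hu) (hηpos _ hu)
    have h := (((htov _ hr).comp r hid).const_mul ((A ^ (2 / κ)) ^ κ))
    simp only [Function.comp] at h
    have h' := h.congr_of_eventuallyEq hev
    refine h'.congr_deriv (Eq.symm ?_)
    rw [q_scale hρ hhom hB hδp hηp, prad_scale hρ hhom hB hδp hηp, hhom', hrewrite, hBκ]
    set D := 1 - 2 * m (A * r) / (A * r) with hD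
    field_simp [hD0]
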